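/- Let P, Q be commuting von Neumann algebras (acting on Hilbert spaces forming a diagram), and let A, B, C, D be preclosed operators fitting in a square diagram A : P₀ → R₀, B : Q₀ → S₀, C : P₀ → Q₀, D : R₀ → S₀ between dense subspaces of Hilbert spaces P, Q, R, S. Form H = P ⊕ Q ⊕ R ⊕ S and the extension operators R̂ (extending A ⊕ B, zero on R ⊕ S) and Ŝ (extending C ⊕ D appropriately). Then R̂ and Ŝ are preclosed, and the strong commutativity of their closures is equivalent to the strong commutativity of the square diagram. -/

import Mathlib

section

variable {P Q R S : Type*}
  [NormedAddCommGroup P] [InnerProductSpace ℂ P] [CompleteSpace P]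
  [NormedAddCommGroup Q] [InnerProductSpace ℂ Q] [CompleteSpace Q]
  [NormedAddCommGroup R] [InnerProductSpace ℂ R] [CompleteSpace R]
  [NormedAddCommGroup S] [InnerProductSpace ℂ S] [CompleteSpace S]

/-- The Hilbert space direct sum `H = P ⊕ Q ⊕ R ⊕ S`. -/
abbrev DirSum4 (P Q R S : Type*)
    [NormedAddCommGroup P] [InnerProductSpace ℂ P]
    [NormedAddCommGroup Q] [InnerProductSpace ℂ Q]
    [NormedAddCommGroup R] [InnerProductSpace ℂ R]
    [NormedAddCommGroup S] [InnerProductSpace ℂ S] :=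
  WithLp 2 (WithLp 2 (P × Q) × WithLp 2 (R × S))

/-- The canonical linear identification of `DirSum4 P Q R S` with `(P × Q) × (R × S)`. -/
noncomputable def dirSum4Equiv : DirSum4 P Q R S ≃ₗ[ℂ] (P × Q) × (R × S) :=
  (WithLp.linearEquiv 2 ℂ (WithLp 2 (P × Q) × WithLp 2 (R × S))).trans
    ((WithLp.linearEquiv 2 ℂ (P × Q)).prodCongr (WithLp.linearEquiv 2 ℂ (R × S)))

/-- First component `ξ ∈ P` of an element of a submodule of the direct sum. -/
noncomputable def proj₁ (T : Submodule ℂ (DirSum4 P Q R S)) : T →ₗ[ℂ] P :=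
  (LinearMap.fst ℂ P Q).comp ((LinearMap.fst ℂ (P × Q) (R × S)).comp
    ((dirSum4Equiv (P := P) (Q := Q) (R := R) (S := S)).toLinearMap.comp T.subtype))

/-- Second component `η ∈ Q` of an element of a submodule of the direct sum. -/
noncomputable def proj₂ (T : Submodule ℂ (DirSum4 P Q R S)) : T →ₗ[ℂ] Q :=
  (LinearMap.snd ℂ P Q).comp ((LinearMap.fst ℂ (P × Q) (R × S)).comp
    ((dirSum4Equiv (P := P) (Q := Q) (R := R) (S := S)).toLinearMap.comp T.subtype))

/-- Third component `χ ∈ R` of an element of a submodule of the direct sum. -/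
noncomputable def proj₃ (T : Submodule ℂ (DirSum4 P Q R S)) : T →ₗ[ℂ] R :=
  (LinearMap.fst ℂ R S).comp ((LinearMap.snd ℂ (P × Q) (R × S)).comp
    ((dirSum4Equiv (P := P) (Q := Q) (R := R) (S := S)).toLinearMap.comp T.subtype))

/-- The extension `R̂` of the pair `A : P → R`, `B : Q → S` to the direct sum:
`R̂(ξ⊕η⊕χ⊕ς) = 0⊕0⊕Aξ⊕Bη`, with domain `D(A) ⊕ D(B) ⊕ R ⊕ S`. -/
noncomputable def Rhat (A : P →ₗ.[ℂ] R) (B : Q →ₗ.[ℂ] S) :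
    DirSum4 P Q R S →ₗ.[ℂ] DirSum4 P Q R S :=
  { domain := ((A.domain.prod B.domain).prod ⊤).comap
      (dirSum4Equiv (P := P) (Q := Q) (R := R) (S := S)).toLinearMap
    toFun := (dirSum4Equiv (P := P) (Q := Q) (R := R) (S := S)).symm.toLinearMap.comp <| LinearMap.prod 0 <| LinearMap.prod
      (A.toFun.comp ((proj₁ _).codRestrict A.domain fun z => z.2.1.1))
      (B.toFun.comp ((proj₂ _).codRestrict B.domain fun z => z.2.1.2)) }

/-- The extension `Ŝ` of the pair `C : P → Q`, `D : R → S` to the direct sum: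
`Ŝ(ξ⊕η⊕χ⊕ς) = 0⊕Cξ⊕0⊕Dχ`, with domain `D(C) ⊕ Q ⊕ D(D) ⊕ S`. -/
noncomputable def Shat (C : P →ₗ.[ℂ] Q) (D : R →ₗ.[ℂ] S) :
    DirSum4 P Q R S →ₗ.[ℂ] DirSum4 P Q R S :=
  { domain := ((C.domain.prod ⊤).prod (D.domain.prod ⊤)).comap
      (dirSum4Equiv (P := P) (Q := Q) (R := R) (S := S)).toLinearMap
    toFun := (dirSum4Equiv (P := P) (Q := Q) (R := R) (S := S)).symm.toLinearMap.comp <| LinearMap.prod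
      (LinearMap.prod 0 (C.toFun.comp ((proj₁ _).codRestrict C.domain fun z => z.2.1.1)))
      (LinearMap.prod 0 (D.toFun.comp ((proj₃ _).codRestrict D.domain fun z => z.2.2.1))) }

/-- Affiliation of a partially defined operator with a von Neumann algebra. -/
def Affiliated {H : Type*} [NormedAddCommGroup H] [InnerProductSpace ℂ H] [CompleteSpace H]
    (M : VonNeumannAlgebra H) (A : H →ₗ.[ℂ] H) : Prop :=
  ∀ u : H →L[ℂ] H, u ∈ M.commutant → u ∈ unitary (H →L[ℂ] H) →
    (∀ ξ : H, ξ ∈ A.domain → u ξ ∈ A.domain) ∧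
    ∀ (ξ : A.domain) (h : u ↑ξ ∈ A.domain), A ⟨u ↑ξ, h⟩ = u (A ξ)

/-- Two operators commute strongly if the von Neumann algebras they generate commute. -/
def StronglyCommutes {H : Type*} [NormedAddCommGroup H] [InnerProductSpace ℂ H]
    [CompleteSpace H] (A B : H →ₗ.[ℂ] H) : Prop :=
  ∃ M N : VonNeumannAlgebra H,
    (∀ x ∈ M, ∀ y ∈ N, Commute x y) ∧ Affiliated M A ∧ Affiliated N B

/-- The square diagram formed by `A`, `B`, `C`, `D` commutes strongly: by definition, the
closures of the extensions `R̂` and `Ŝ` commute strongly. -/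
def DiagramStronglyCommutes (A : P →ₗ.[ℂ] R) (B : Q →ₗ.[ℂ] S)
    (C : P →ₗ.[ℂ] Q) (D : R →ₗ.[ℂ] S) : Prop :=
  StronglyCommutes (Rhat A B).closure (Shat C D).closure

/-- The canonical continuous linear identification of the direct sum. -/
noncomputable def dirSum4CLE : DirSum4 P Q R S ≃L[ℂ] (P × Q) × (R × S) :=
  (WithLp.prodContinuousLinearEquiv 2 ℂ (WithLp 2 (P × Q)) (WithLp 2 (R × S))).trans
    ((WithLp.prodContinuousLinearEquiv 2 ℂ P Q).prodCongr (WithLp.prodContinuousLinearEquiv 2 ℂ R S))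

theorem mem_closure_graph_map {E F G K : Type*}
    [NormedAddCommGroup E] [NormedSpace ℂ E] [NormedAddCommGroup F] [NormedSpace ℂ F]
    [NormedAddCommGroup G] [NormedSpace ℂ G] [NormedAddCommGroup K] [NormedSpace ℂ K]
    (f : E →ₗ.[ℂ] F) (g : G →ₗ.[ℂ] K) (hg : g.IsClosable)
    (T : E × F →L[ℂ] G × K) (hT : ∀ z ∈ f.graph, T z ∈ g.graph)
    {z : E × F} (hz : z ∈ f.graph.topologicalClosure) : T z ∈ g.closure.graph := by
  rw [← hg.graph_closure_eq_closure_graph]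
  have h1 : T z ∈ closure (T '' (f.graph : Set (E × F))) :=
    image_closure_subset_closure_image T.continuous (Set.mem_image_of_mem _ hz)
  exact closure_mono (Set.image_subset_iff.mpr hT) h1

theorem Rhat_isClosable (A : P →ₗ.[ℂ] R) (B : Q →ₗ.[ℂ] S)
    (hA : A.IsClosable) (hB : B.IsClosable) : (Rhat A B).IsClosable := by
  refine ⟨((Rhat A B).graph.topologicalClosure).toLinearPMap,
    (Submodule.toLinearPMap_graph_eq _ ?_).symm⟩
  intro z hz hz1
  let H := DirSum4 P Q R S
  let e := dirSum4CLE (P := P) (Q := Q) (R := R) (S := S)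
  let cp1 : H →L[ℂ] P := (ContinuousLinearMap.fst ℂ P Q).comp
    ((ContinuousLinearMap.fst ℂ (P × Q) (R × S)).comp e.toContinuousLinearMap) 
  let cp2 : H →L[ℂ] Q := (ContinuousLinearMap.snd ℂ P Q).comp
    ((ContinuousLinearMap.fst ℂ (P × Q) (R × S)).comp e.toContinuousLinearMap) 
  let cp3 : H →L[ℂ] R := (ContinuousLinearMap.fst ℂ R S).comp
    ((ContinuousLinearMap.snd ℂ (P × Q) (R × S)).comp e.toContinuousLinearMap) 
  let cp4 : H →L[ℂ] S := (ContinuousLinearMap.snd ℂ R S).comp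
    ((ContinuousLinearMap.snd ℂ (P × Q) (R × S)).comp e.toContinuousLinearMap) 
  let fstH := ContinuousLinearMap.fst ℂ H H
  let sndH := ContinuousLinearMap.snd ℂ H H
  -- the A-part of the graph lands in the graph of A
  have hTA : ∀ w ∈ (Rhat A B).graph,
      ((cp1.comp fstH).prod (cp3.comp sndH)) w ∈ A.graph := by
    intro w hw
    rw [LinearPMap.mem_graph_iff] at hw
    obtain ⟨d, hd1, hd2⟩ := hw
    have hw' : w = (↑d, (Rhat A B) d) := Prod.ext hd1.symm hd2.symm
    rw [hw']
    exact A.mem_graph ⟨_, d.2.1.1⟩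
  have hTB : ∀ w ∈ (Rhat A B).graph,
      ((cp2.comp fstH).prod (cp4.comp sndH)) w ∈ B.graph := by
    intro w hw
    rw [LinearPMap.mem_graph_iff] at hw
    obtain ⟨d, hd1, hd2⟩ := hw
    have hw' : w = (↑d, (Rhat A B) d) := Prod.ext hd1.symm hd2.symm
    rw [hw']
    exact B.mem_graph ⟨_, d.2.1.2⟩
  have h3 : ((cp1 z.1, cp3 z.2) : P × R) ∈ A.closure.graph :=
    mem_closure_graph_map _ A hA _ hTA hz
  have h4 : ((cp2 z.1, cp4 z.2) : Q × S) ∈ B.closure.graph :=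
    mem_closure_graph_map _ B hB _ hTB hz
  have e3 : cp3 z.2 = 0 := A.closure.graph_fst_eq_zero_snd h3 (by rw [hz1]; simp)
  have e4 : cp4 z.2 = 0 := B.closure.graph_fst_eq_zero_snd h4 (by rw [hz1]; simp)
  -- the first two components of the output vanish
  have hker : (Rhat A B).graph ≤ LinearMap.ker (((cp1.comp sndH).prod (cp2.comp sndH) : H × H →L[ℂ] P × Q) : H × H →ₗ[ℂ] P × Q) := by
    intro w hw
    rw [LinearPMap.mem_graph_iff] at hw
    obtain ⟨d, hd1, hd2⟩ := hw
    have hw' : w = (↑d, (Rhat A B) d) := Prod.ext hd1.symm hd2.symm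
    rw [hw', LinearMap.mem_ker]
    rfl
  have hker' := Submodule.topologicalClosure_minimal _ hker
    (ContinuousLinearMap.isClosed_ker _) hz
  rw [LinearMap.mem_ker] at hker'
  have e1 : cp1 z.2 = 0 := congrArg Prod.fst hker'
  have e2 : cp2 z.2 = 0 := congrArg Prod.snd hker'
  have : dirSum4Equiv z.2 = 0 := by
    have hval : dirSum4Equiv z.2 = ((cp1 z.2, cp2 z.2), (cp3 z.2, cp4 z.2)) := rfl
    rw [hval, e1, e2, e3, e4]
    rfl
  exact (LinearEquiv.map_eq_zero_iff _).mp this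

theorem Shat_isClosable (C : P →ₗ.[ℂ] Q) (D : R →ₗ.[ℂ] S)
    (hC : C.IsClosable) (hD : D.IsClosable) : (Shat C D).IsClosable := by
  refine ⟨((Shat C D).graph.topologicalClosure).toLinearPMap,
    (Submodule.toLinearPMap_graph_eq _ ?_).symm⟩
  intro z hz hz1
  let H := DirSum4 P Q R S
  let e := dirSum4CLE (P := P) (Q := Q) (R := R) (S := S)
  let cp1 : H →L[ℂ] P := (ContinuousLinearMap.fst ℂ P Q).comp
    ((ContinuousLinearMap.fst ℂ (P × Q) (R × S)).comp e.toContinuousLinearMap) 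
  let cp2 : H →L[ℂ] Q := (ContinuousLinearMap.snd ℂ P Q).comp
    ((ContinuousLinearMap.fst ℂ (P × Q) (R × S)).comp e.toContinuousLinearMap) 
  let cp3 : H →L[ℂ] R := (ContinuousLinearMap.fst ℂ R S).comp
    ((ContinuousLinearMap.snd ℂ (P × Q) (R × S)).comp e.toContinuousLinearMap) 
  let cp4 : H →L[ℂ] S := (ContinuousLinearMap.snd ℂ R S).comp
    ((ContinuousLinearMap.snd ℂ (P × Q) (R × S)).comp e.toContinuousLinearMap) 
  let fstH := ContinuousLinearMap.fst ℂ H H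
  let sndH := ContinuousLinearMap.snd ℂ H H
  have hTC : ∀ w ∈ (Shat C D).graph,
      ((cp1.comp fstH).prod (cp2.comp sndH)) w ∈ C.graph := by
    intro w hw
    rw [LinearPMap.mem_graph_iff] at hw
    obtain ⟨d, hd1, hd2⟩ := hw
    have hw' : w = (↑d, (Shat C D) d) := Prod.ext hd1.symm hd2.symm
    rw [hw']
    exact C.mem_graph ⟨_, d.2.1.1⟩
  have hTD : ∀ w ∈ (Shat C D).graph,
      ((cp3.comp fstH).prod (cp4.comp sndH)) w ∈ D.graph := by
    intro w hw
    rw [LinearPMap.mem_graph_iff] at hw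
    obtain ⟨d, hd1, hd2⟩ := hw
    have hw' : w = (↑d, (Shat C D) d) := Prod.ext hd1.symm hd2.symm
    rw [hw']
    exact D.mem_graph ⟨_, d.2.2.1⟩
  have h3 : ((cp1 z.1, cp2 z.2) : P × Q) ∈ C.closure.graph :=
    mem_closure_graph_map _ C hC _ hTC hz
  have h4 : ((cp3 z.1, cp4 z.2) : R × S) ∈ D.closure.graph :=
    mem_closure_graph_map _ D hD _ hTD hz
  have e2 : cp2 z.2 = 0 := C.closure.graph_fst_eq_zero_snd h3 (by rw [hz1]; simp)
  have e4 : cp4 z.2 = 0 := D.closure.graph_fst_eq_zero_snd h4 (by rw [hz1]; simp)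
  have hker : (Shat C D).graph ≤ LinearMap.ker (((cp1.comp sndH).prod (cp3.comp sndH) : H × H →L[ℂ] P × R) : H × H →ₗ[ℂ] P × R) := by
    intro w hw
    rw [LinearPMap.mem_graph_iff] at hw
    obtain ⟨d, hd1, hd2⟩ := hw
    have hw' : w = (↑d, (Shat C D) d) := Prod.ext hd1.symm hd2.symm
    rw [hw', LinearMap.mem_ker]
    rfl
  have hker' := Submodule.topologicalClosure_minimal _ hker
    (ContinuousLinearMap.isClosed_ker _) hz
  rw [LinearMap.mem_ker] at hker'
  have e1 : cp1 z.2 = 0 := congrArg Prod.fst hker'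
  have e3 : cp3 z.2 = 0 := congrArg Prod.snd hker'
  have : dirSum4Equiv z.2 = 0 := by
    have hval : dirSum4Equiv z.2 = ((cp1 z.2, cp2 z.2), (cp3 z.2, cp4 z.2)) := rfl
    rw [hval, e1, e2, e3, e4]
    rfl
  exact (LinearEquiv.map_eq_zero_iff _).mp this

/-- given preclosed operators `A : P₀ → R₀`, `B : Q₀ → S₀`, `C : P₀ → Q₀`,
`D : R₀ → S₀` fitting in a square diagram between dense subspaces of the Hilbert spaces
`P, Q, R, S`, the extensions `R̂` (of `A ⊕ B`) and `Ŝ` (of `C ⊕ D`) on `H = P ⊕ Q ⊕ R ⊕ S`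
are preclosed, and strong commutativity of their closures is (by definition) equivalent to
strong commutativity of the square diagram. -/
theorem stmt11 (A : P →ₗ.[ℂ] R) (B : Q →ₗ.[ℂ] S) (C : P →ₗ.[ℂ] Q) (D : R →ₗ.[ℂ] S)
    (P₀ : Submodule ℂ P) (Q₀ : Submodule ℂ Q) (R₀ : Submodule ℂ R) (S₀ : Submodule ℂ S)
    (hP₀ : Dense (P₀ : Set P)) (hQ₀ : Dense (Q₀ : Set Q))
    (hR₀ : Dense (R₀ : Set R)) (hS₀ : Dense (S₀ : Set S))
    (hAdom : A.domain ≤ P₀) (hBdom : B.domain ≤ Q₀)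
    (hCdom : C.domain ≤ P₀) (hDdom : D.domain ≤ R₀)
    (hAran : ∀ ξ : A.domain, A ξ ∈ R₀) (hBran : ∀ ξ : B.domain, B ξ ∈ S₀)
    (hCran : ∀ ξ : C.domain, C ξ ∈ Q₀) (hDran : ∀ ξ : D.domain, D ξ ∈ S₀)
    (hA : A.IsClosable) (hB : B.IsClosable) (hC : C.IsClosable) (hD : D.IsClosable) :
    (Rhat A B).IsClosable ∧ (Shat C D).IsClosable ∧
    (StronglyCommutes (Rhat A B).closure (Shat C D).closure ↔
      DiagramStronglyCommutes A B C D) :=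
  ⟨Rhat_isClosable A B hA hB, Shat_isClosable C D hC hD, Iff.rfl⟩

end
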